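/- Let β > 0, δ > 0 and 0 < ε < √(2β)/2, set t_n = nδ, p_n = exp(−δβ e^{2(√(2β)−2ε)t_n}) and q_n = ⌈exp(e^{2(√(2β)−3ε)t_n})⌉. Then the series ∑_{n≥0} (1 − (1 − p_n)^{q_n}) converges. -/

import Mathlib

open Real Filter Asymptotics Topology

private lemma aux_tendsto (β δ ε : ℝ) (hβ : 0 < β) (hδ : 0 < δ) (hε : 0 < ε)
    (hε' : ε < Real.sqrt (2 * β) / 2) :
    Tendsto (fun x : ℝ => δ * β * exp (2 * (Real.sqrt (2 * β) - 2 * ε) * (x * δ))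
      - exp (2 * (Real.sqrt (2 * β) - 3 * ε) * (x * δ)) - x) atTop atTop := by
  set s := Real.sqrt (2 * β) with hs
  have hb : 0 < 2 * (s - 2 * ε) * δ := by
    have h : 2 * ε < s := by linarith
    have : 0 < s - 2 * ε := by linarith
    positivity
  have h1 : Tendsto (fun x : ℝ => exp (2 * (s - 2 * ε) * δ * x)) atTop atTop :=
    Real.tendsto_exp_atTop.comp (tendsto_id.const_mul_atTop hb)
  have h2 : Tendsto (fun x : ℝ => exp (-(2 * ε * δ * x))) atTop (𝓝 0) :=
    Real.tendsto_exp_neg_atTop_nhds_zero.comp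
      (tendsto_id.const_mul_atTop (by positivity : (0:ℝ) < 2 * ε * δ))
  have h3 : Tendsto (fun x : ℝ => x * exp (-(2 * (s - 2 * ε) * δ * x))) atTop (𝓝 0) := by
    have h := (Real.tendsto_pow_mul_exp_neg_atTop_nhds_zero 1).comp
      (tendsto_id.const_mul_atTop hb (l := atTop))
    have h' := h.const_mul (1 / (2 * (s - 2 * ε) * δ))
    simp only [mul_zero] at h'
    refine h'.congr fun x => ?_
    simp only [Function.comp, pow_one, id_eq]
    field_simp
    exact mul_div_cancel_left₀ x (by linarith : (0:ℝ) < s - 2 * ε).ne'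
  have hbr : Tendsto (fun x : ℝ => δ * β - exp (-(2 * ε * δ * x))
      - x * exp (-(2 * (s - 2 * ε) * δ * x))) atTop (𝓝 (δ * β)) := by
    have := (tendsto_const_nhds (x := δ * β) (f := atTop)).sub h2 |>.sub h3
    simpa using this
  have := h1.atTop_mul_pos (by positivity : (0:ℝ) < δ * β) hbr
  refine this.congr fun x => ?_
  have e1 : exp (2 * (s - 2 * ε) * δ * x) * exp (-(2 * ε * δ * x))
      = exp (2 * (s - 3 * ε) * (x * δ)) := by
    rw [← Real.exp_add]; ring_nf
  have e2 : exp (2 * (s - 2 * ε) * δ * x) * exp (-(2 * (s - 2 * ε) * δ * x)) = 1 := by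
    rw [← Real.exp_add]; ring_nf; exact Real.exp_zero
  have e3 : 2 * (s - 2 * ε) * δ * x = 2 * (s - 2 * ε) * (x * δ) := by ring
  calc exp (2 * (s - 2 * ε) * δ * x) * (δ * β - exp (-(2 * ε * δ * x))
        - x * exp (-(2 * (s - 2 * ε) * δ * x)))
      = δ * β * exp (2 * (s - 2 * ε) * δ * x)
        - exp (2 * (s - 2 * ε) * δ * x) * exp (-(2 * ε * δ * x))
        - x * (exp (2 * (s - 2 * ε) * δ * x) * exp (-(2 * (s - 2 * ε) * δ * x))) := by ring
    _ = _ := by rw [e1, e2, e3]; ring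

/-- With `p_n = exp(-δβ e^{2(√(2β)-2ε) nδ})` and `q_n = ⌈exp(e^{2(√(2β)-3ε) nδ})⌉`,
the series `∑ (1 - (1 - p_n)^{q_n})` converges. -/
theorem summable_geometric_tail
    (β δ ε : ℝ) (hβ : 0 < β) (hδ : 0 < δ) (hε : 0 < ε) (hε' : ε < Real.sqrt (2 * β) / 2) :
    Summable (fun n : ℕ =>
      1 - (1 - Real.exp (-(δ * β * Real.exp (2 * (Real.sqrt (2 * β) - 2 * ε) * (n * δ))))) ^
        (⌈Real.exp (Real.exp (2 * (Real.sqrt (2 * β) - 3 * ε) * (n * δ)))⌉₊ : ℕ)) := by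
  set s := Real.sqrt (2 * β) with hs
  have hg : Summable (fun n : ℕ => Real.exp (-(n : ℝ))) := by
    have : Summable (fun n : ℕ => (Real.exp (-1)) ^ n) :=
      summable_geometric_of_lt_one (Real.exp_pos _).le
        (Real.exp_lt_one_iff.mpr (by norm_num))
    refine this.congr fun n => ?_
    rw [← Real.exp_nat_mul]; ring_nf
  refine summable_of_isBigO_nat hg ?_
  rw [Asymptotics.isBigO_iff]
  refine ⟨2, ?_⟩
  have hev : ∀ᶠ (n : ℕ) in atTop,
      δ * β * exp (2 * (s - 2 * ε) * ((n : ℝ) * δ))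
        - exp (2 * (s - 3 * ε) * ((n : ℝ) * δ)) - (n : ℝ) ≥ 0 :=
    ((aux_tendsto β δ ε hβ hδ hε hε').comp tendsto_natCast_atTop_atTop).eventually_ge_atTop 0
  filter_upwards [hev] with n hn
  set B : ℝ := δ * β * exp (2 * (s - 2 * ε) * ((n : ℝ) * δ)) with hB
  set A : ℝ := exp (2 * (s - 3 * ε) * ((n : ℝ) * δ)) with hA
  set p : ℝ := Real.exp (-B) with hp
  set q : ℕ := ⌈Real.exp A⌉₊ with hq
  have hB0 : 0 < B := by positivity
  have hp0 : 0 < p := Real.exp_pos _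
  have hp1 : p < 1 := Real.exp_lt_one_iff.mpr (by linarith)
  have h01 : 0 ≤ 1 - p := by linarith
  have h11 : 1 - p ≤ 1 := by linarith
  -- Bernoulli
  have hbern : 1 + (q : ℝ) * (-p) ≤ (1 + -p) ^ q :=
    one_add_mul_le_pow (by linarith) q
  have hfle : 1 - (1 - p) ^ q ≤ (q : ℝ) * p := by
    have : (1 : ℝ) + -p = 1 - p := by ring
    rw [this] at hbern; linarith
  have hf0 : 0 ≤ 1 - (1 - p) ^ q := by
    have := pow_le_one₀ h01 h11 (n := q)
    linarith
  -- q ≤ 2 exp A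
  have hqle : (q : ℝ) ≤ 2 * Real.exp A := by
    have h1 : (q : ℝ) < Real.exp A + 1 := Nat.ceil_lt_add_one (Real.exp_pos _).le
    have h2 : (1 : ℝ) ≤ Real.exp A := Real.one_le_exp (Real.exp_pos _).le
    linarith
  have hqp : (q : ℝ) * p ≤ 2 * Real.exp A * Real.exp (-B) :=
    mul_le_mul_of_nonneg_right hqle hp0.le
  have hAB : Real.exp A * Real.exp (-B) ≤ Real.exp (-(n : ℝ)) := by
    rw [← Real.exp_add]
    exact Real.exp_le_exp.mpr (by linarith)
  have : 1 - (1 - p) ^ q ≤ 2 * Real.exp (-(n : ℝ)) := by nlinarith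
  rw [Real.norm_eq_abs, Real.norm_eq_abs, abs_of_nonneg hf0,
    abs_of_nonneg (Real.exp_pos _).le]
  exact this
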